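/- arXiv:2402.01160 — 2 statements merged into one kernel-verified Lean document; each statement's English description precedes it below -/
import Mathlib

section
/- Define f(α) = (27 d γ²/(N s²)) (1 - exp(-α/(3γ)))³ + (2 d γ²/N) exp(-α/γ) for α ≥ 0, where d, N, s, γ > 0. Then f attains its minimum over [0, ∞) uniquely at α* = 3γ ln(1 + √6 s / 9). -/
open Real

lemma cubic_min_aux (A B t τ : ℝ) (hA : 0 < A) (hB : 0 < B)
    (ht0 : 0 < t) (ht1 : t ≤ 1) (hτ0 : 0 < τ) (hτ1 : τ < 1)
    (hc : A * (1 - τ) ^ 2 = B * τ ^ 2) :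
    A * (1 - τ) ^ 3 + B * τ ^ 3 ≤ A * (1 - t) ^ 3 + B * t ^ 3 ∧
      (A * (1 - t) ^ 3 + B * t ^ 3 = A * (1 - τ) ^ 3 + B * τ ^ 3 → t = τ) := by
  have hP : 0 < A * (3 - t - 2 * τ) + B * (t + 2 * τ) := by nlinarith
  have hid : A * (1 - t) ^ 3 + B * t ^ 3 - (A * (1 - τ) ^ 3 + B * τ ^ 3)
      = (t - τ) ^ 2 * (A * (3 - t - 2 * τ) + B * (t + 2 * τ)) := by
    linear_combination (3 * (τ - t)) * hc
  constructor
  · nlinarith [sq_nonneg (t - τ)]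
  · intro h
    have h2 : (t - τ) ^ 2 * (A * (3 - t - 2 * τ) + B * (t + 2 * τ)) = 0 := by
      rw [← hid]; linarith
    have h3 : (t - τ) ^ 2 = 0 := by
      rcases mul_eq_zero.1 h2 with h | h
      · exact h
      · exact absurd h (ne_of_gt hP)
    have := pow_eq_zero_iff (n := 2) (by norm_num) |>.1 h3
    linarith

theorem optimal_alpha_unique_min (d N s γ : ℝ)
    (hd : 0 < d) (hN : 0 < N) (hs : 0 < s) (hγ : 0 < γ) :
    ∀ β : ℝ, 0 ≤ β →
      (27 * d * γ ^ 2 / (N * s ^ 2))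
          * (1 - Real.exp (-(3 * γ * Real.log (1 + Real.sqrt 6 * s / 9)) / (3 * γ))) ^ 3
        + (2 * d * γ ^ 2 / N)
          * Real.exp (-(3 * γ * Real.log (1 + Real.sqrt 6 * s / 9)) / γ)
      ≤ (27 * d * γ ^ 2 / (N * s ^ 2)) * (1 - Real.exp (-β / (3 * γ))) ^ 3
        + (2 * d * γ ^ 2 / N) * Real.exp (-β / γ)
    ∧ ((27 * d * γ ^ 2 / (N * s ^ 2)) * (1 - Real.exp (-β / (3 * γ))) ^ 3
        + (2 * d * γ ^ 2 / N) * Real.exp (-β / γ)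
      = (27 * d * γ ^ 2 / (N * s ^ 2))
          * (1 - Real.exp (-(3 * γ * Real.log (1 + Real.sqrt 6 * s / 9)) / (3 * γ))) ^ 3
        + (2 * d * γ ^ 2 / N)
          * Real.exp (-(3 * γ * Real.log (1 + Real.sqrt 6 * s / 9)) / γ)
      → β = 3 * γ * Real.log (1 + Real.sqrt 6 * s / 9)) := by
  intro β hβ
  set u : ℝ := Real.sqrt 6 * s / 9 with hu_def
  have hu : 0 < u := by
    have h6 : 0 < Real.sqrt 6 := Real.sqrt_pos.2 (by norm_num)
    positivity
  set L : ℝ := Real.log (1 + u) with hL_def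
  have h1u : (0:ℝ) < 1 + u := by linarith
  -- exponential simplifications
  have hA : 0 < 27 * d * γ ^ 2 / (N * s ^ 2) := by positivity
  have hB : 0 < 2 * d * γ ^ 2 / N := by positivity
  have hτeq : Real.exp (-(3 * γ * L) / (3 * γ)) = (1 + u)⁻¹ := by
    have : -(3 * γ * L) / (3 * γ) = -L := by field_simp
    rw [this, Real.exp_neg, Real.exp_log h1u]
  have hτcube : Real.exp (-(3 * γ * L) / γ) = ((1 + u)⁻¹) ^ 3 := by
    have h1 : -(3 * γ * L) / γ = (3:ℕ) * (-(3 * γ * L) / (3 * γ)) := by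
      push_cast; field_simp
    rw [h1, Real.exp_nat_mul, hτeq]
  have htcube : Real.exp (-β / γ) = (Real.exp (-β / (3 * γ))) ^ 3 := by
    have h1 : -β / γ = (3:ℕ) * (-β / (3 * γ)) := by push_cast; field_simp
    rw [h1, Real.exp_nat_mul]
  set t : ℝ := Real.exp (-β / (3 * γ)) with ht_def
  set τ : ℝ := (1 + u)⁻¹ with hτ_def
  have ht0 : 0 < t := Real.exp_pos _
  have ht1 : t ≤ 1 := by
    rw [ht_def]
    have h0 : -β / (3 * γ) ≤ 0 := by
      have : 0 ≤ β / (3 * γ) := by positivity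
      linarith [neg_div (3*γ) β]
    calc Real.exp (-β / (3 * γ)) ≤ Real.exp 0 := Real.exp_le_exp.2 h0
      _ = 1 := Real.exp_zero
  have hτ0 : 0 < τ := by rw [hτ_def]; positivity
  have hτ1 : τ < 1 := by
    rw [hτ_def]
    exact inv_lt_one_of_one_lt₀ (by linarith)
  have h6 : Real.sqrt 6 ^ 2 = 6 := Real.sq_sqrt (by norm_num)
  have hone : (1:ℝ) - τ = u * τ := by rw [hτ_def]; field_simp; ring
  have hu2 : u ^ 2 = 2 * s ^ 2 / 27 := by
    rw [hu_def, div_pow, mul_pow, h6]; ring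
  have hkey : 27 * d * γ ^ 2 / (N * s ^ 2) * u ^ 2 = 2 * d * γ ^ 2 / N := by
    rw [hu2]; field_simp
  have hc : (27 * d * γ ^ 2 / (N * s ^ 2)) * (1 - τ) ^ 2 = (2 * d * γ ^ 2 / N) * τ ^ 2 := by
    rw [hone, mul_pow, ← mul_assoc, hkey]
  obtain ⟨hle, heq⟩ := cubic_min_aux (27 * d * γ ^ 2 / (N * s ^ 2)) (2 * d * γ ^ 2 / N)
    t τ hA hB ht0 ht1 hτ0 hτ1 hc
  rw [hτeq, hτcube, htcube]
  constructor
  · linarith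
  · intro h
    have ht : t = τ := heq (by linarith)
    have hexp : Real.exp (-β / (3 * γ)) = Real.exp (-L) := by
      rw [← ht_def, ht, hτ_def, Real.exp_neg, Real.exp_log h1u]
    have h2 := Real.exp_eq_exp.1 hexp
    have hγ3 : (3 * γ) ≠ 0 := by positivity
    field_simp at h2
    linarith
end

section
/- With α* = 3γ ln(1 + √6 s/9), the minimal value of f(α) = (27 d γ²/(N s²))(1 - exp(-α/(3γ)))³ + (2 d γ²/N) exp(-α/γ) equals 27 d γ² / (N (s + 3√6/2)²). -/
open Real

theorem optimal_error_value (d N s γ : ℝ)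
    (hd : 0 < d) (hN : 0 < N) (hs : 0 < s) (hγ : 0 < γ) :
    (27 * d * γ ^ 2 / (N * s ^ 2))
        * (1 - Real.exp (-(3 * γ * Real.log (1 + Real.sqrt 6 * s / 9)) / (3 * γ))) ^ 3
      + (2 * d * γ ^ 2 / N)
        * Real.exp (-(3 * γ * Real.log (1 + Real.sqrt 6 * s / 9)) / γ)
    = 27 * d * γ ^ 2 / (N * (s + 3 * Real.sqrt 6 / 2) ^ 2) := by
  obtain ⟨r, hr, hr2⟩ : ∃ r : ℝ, 0 < r ∧ r ^ 2 = 6 :=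
    ⟨Real.sqrt 6, Real.sqrt_pos.mpr (by norm_num), Real.sq_sqrt (by norm_num)⟩
  have hrs : Real.sqrt 6 = r := by
    rw [show (6:ℝ) = r ^ 2 by rw [hr2], Real.sqrt_sq hr.le]
  rw [hrs]
  obtain ⟨t, ht, htpos⟩ : ∃ t : ℝ, t = 1 + r * s / 9 ∧ 0 < t :=
    ⟨_, rfl, by positivity⟩
  rw [← ht]
  have h1 : -(3 * γ * Real.log t) / (3 * γ) = Real.log t⁻¹ := by
    rw [Real.log_inv]; field_simp
  have h2 : -(3 * γ * Real.log t) / γ = Real.log (t⁻¹ ^ 3) := by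
    rw [Real.log_pow, Real.log_inv]; field_simp; ring
  rw [h1, h2, Real.exp_log (by positivity), Real.exp_log (by positivity)]
  have h1mt : 1 - t⁻¹ = (r * s / 9) / t := by
    rw [ht]; field_simp; ring
  have key : s + 3 * r / 2 = 3 * r / 2 * t := by
    rw [ht]; field_simp; nlinarith [hr2]
  rw [h1mt, key]
  have hN' := hN.ne'
  have hs' := hs.ne'
  have ht' := htpos.ne'
  have hr' := hr.ne'
  field_simp
  ring_nf
  linear_combination (13122 + 243 * s * r * (r ^ 2 + 6)) * hr2 - 78732 * ht
end
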